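/- arXiv:0809.1307 — 5 statements merged into one kernel-verified Lean document; each statement's English description precedes it below -/
import Mathlib

section
/- Let R be a commutative integral domain, let ⋆ be a semistar operation of finite type on R, and let I be a quasi-⋆-ideal of R. Then √I^⋆ ∩ R = √I; that is, the radical √I is also a quasi-⋆-ideal of R. -/
open Pointwise

/-- A semistar operation on an integral domain `R` with quotient field `K`:
a map `E ↦ E^⋆` on the nonzero `R`-submodules of `K` satisfying the usual axioms.
(The map is defined on all submodules, but the axioms are only required for the
nonzero ones.) -/
structure SemistarOperation (R K : Type*) [CommRing R] [IsDomain R] [Field K]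
    [Algebra R K] [IsFractionRing R K] where
  star : Submodule R K → Submodule R K
  smul_star : ∀ (x : K), x ≠ 0 → ∀ E : Submodule R K, E ≠ ⊥ → star (x • E) = x • star E
  mono : ∀ E F : Submodule R K, E ≠ ⊥ → E ≤ F → star E ≤ star F
  le_star : ∀ E : Submodule R K, E ≠ ⊥ → E ≤ star E
  star_star : ∀ E : Submodule R K, E ≠ ⊥ → star (star E) = star E

namespace SemistarOperation

variable {R K : Type*} [CommRing R] [IsDomain R] [Field K] [Algebra R K] [IsFractionRing R K]
variable (s : SemistarOperation R K)

/-- `⋆` is of finite type: for every nonzero submodule `E`, the module `E^⋆` is the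
union of the `F^⋆` over the nonzero finitely generated submodules `F ⊆ E`. -/
def FiniteType : Prop :=
  ∀ E : Submodule R K, E ≠ ⊥ → ∀ x : K,
    x ∈ s.star E ↔ ∃ F : Submodule R K, F.FG ∧ F ≠ ⊥ ∧ F ≤ E ∧ x ∈ s.star F

/-- `I^⋆`, for an ideal `I` of `R` (viewing `I` as a submodule of `K`). -/
def idealStar (I : Ideal R) : Submodule R K :=
  s.star (Submodule.map (Algebra.linearMap R K) I)

/-- `I^⋆ ∩ R`, as an ideal of `R`. -/
def contract (I : Ideal R) : Ideal R :=
  Submodule.comap (Algebra.linearMap R K) (s.idealStar I)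

/-- A (nonzero) ideal `I` of `R` is a quasi-`⋆`-ideal if `I^⋆ ∩ R = I`. -/
def IsQuasiStarIdeal (I : Ideal R) : Prop :=
  I ≠ ⊥ ∧ s.contract I = I

/-- A nonzero ideal `L` of `R` is `⋆`-finite if `L^⋆ = F^⋆` for some nonzero
finitely generated ideal `F` of `R`. -/
def IsStarFinite (L : Ideal R) : Prop :=
  L ≠ ⊥ ∧ ∃ F : Ideal R, F.FG ∧ F ≠ ⊥ ∧ s.idealStar F = s.idealStar L

/-- `⋆` is stable: it distributes over finite intersections (of nonzero submodules
with nonzero intersection). -/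
def Stable : Prop :=
  ∀ E F : Submodule R K, E ≠ ⊥ → F ≠ ⊥ → E ⊓ F ≠ ⊥ →
    s.star (E ⊓ F) = s.star E ⊓ s.star F

/-- `⋆-Min(I)`: the set of quasi-`⋆`-prime ideals of `R` minimal over `I`. -/
def starMin (I : Ideal R) : Set (Ideal R) :=
  {P | Minimal (fun Q : Ideal R => Q.IsPrime ∧ s.IsQuasiStarIdeal Q ∧ I ≤ Q) P}

/-- A nonzero ideal `I` of `R` is a `⋆`-SFT-ideal if there are a finitely generated
ideal `J ⊆ I` and a positive integer `k` with `a ^ k ∈ J^⋆` for every `a ∈ I^⋆`. -/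
def IsSFT (I : Ideal R) : Prop :=
  I ≠ ⊥ ∧ ∃ J : Ideal R, J.FG ∧ J ≤ I ∧ ∃ k : ℕ, 0 < k ∧
    ∀ a ∈ s.idealStar I, a ^ k ∈ s.idealStar J

/-- `R` is a `⋆`-SFT-ring if every nonzero ideal of `R` is a `⋆`-SFT-ideal. -/
def IsSFTRing : Prop := ∀ I : Ideal R, I ≠ ⊥ → s.IsSFT I

end SemistarOperation

namespace SemistarOperation

variable {R K : Type*} [CommRing R] [IsDomain R] [Field K] [Algebra R K] [IsFractionRing R K]

omit [IsDomain R] [IsFractionRing R K] in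
lemma aux_mem_smul {x y : K} {E : Submodule R K} : y ∈ x • E ↔ ∃ e ∈ E, x * e = y := by
  constructor
  · intro h
    obtain ⟨e, he, rfl⟩ := Set.mem_smul_set.1 (show y ∈ x • (E : Set K) from h)
    exact ⟨e, he, rfl⟩
  · rintro ⟨e, he, rfl⟩
    exact Submodule.smul_mem_pointwise_smul e x E he

omit [IsFractionRing R K] in
lemma aux_mul_ne_bot (E F : Submodule R K) (hE : E ≠ ⊥) (hF : F ≠ ⊥) : E * F ≠ ⊥ := by
  obtain ⟨e, heE, he⟩ := Submodule.exists_mem_ne_zero_of_ne_bot hE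
  obtain ⟨f, hfF, hf⟩ := Submodule.exists_mem_ne_zero_of_ne_bot hF
  intro h
  have : e * f ∈ E * F := Submodule.mul_mem_mul heE hfF
  rw [h, Submodule.mem_bot] at this
  exact mul_ne_zero he hf this

omit [IsDomain R] [IsFractionRing R K] in
lemma aux_smul_ne_bot {x : K} (hx : x ≠ 0) {E : Submodule R K} (hE : E ≠ ⊥) :
    x • E ≠ ⊥ := by
  obtain ⟨e, heE, he⟩ := Submodule.exists_mem_ne_zero_of_ne_bot hE
  intro h
  have : x * e ∈ x • E := aux_mem_smul.2 ⟨e, heE, rfl⟩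
  rw [h, Submodule.mem_bot] at this
  exact mul_ne_zero hx he this

variable (s : SemistarOperation R K)

lemma aux_star_ne_bot (E : Submodule R K) (hE : E ≠ ⊥) : s.star E ≠ ⊥ := fun h =>
  hE (le_bot_iff.1 (h ▸ s.le_star E hE))

lemma aux_star_mul_star_le (E F : Submodule R K) (hE : E ≠ ⊥) (hF : F ≠ ⊥) :
    s.star E * s.star F ≤ s.star (E * F) := by
  have hEF : E * F ≠ ⊥ := aux_mul_ne_bot E F hE hF
  have step1 : s.star E * F ≤ s.star (E * F) := by
    refine Submodule.mul_le.2 fun m hm f hf => ?_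
    rcases eq_or_ne f 0 with rfl | hf0
    · simpa using Submodule.zero_mem _
    have h1 : m * f ∈ f • s.star E := aux_mem_smul.2 ⟨m, hm, mul_comm f m⟩
    rw [← s.smul_star f hf0 E hE] at h1
    refine s.mono (f • E) (E * F) (aux_smul_ne_bot hf0 hE) ?_ h1
    rintro y hy
    obtain ⟨e, heE, rfl⟩ := aux_mem_smul.1 hy
    have h2 : e * f ∈ E * F := Submodule.mul_mem_mul heE hf
    rwa [mul_comm e f] at h2
  have hsEF : s.star E * F ≠ ⊥ := aux_mul_ne_bot _ F (s.aux_star_ne_bot E hE) hF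
  have step2 : s.star E * s.star F ≤ s.star (s.star E * F) := by
    refine Submodule.mul_le.2 fun m hm n hn => ?_
    rcases eq_or_ne m 0 with rfl | hm0
    · simpa using Submodule.zero_mem _
    have h1 : m * n ∈ m • s.star F := aux_mem_smul.2 ⟨n, hn, rfl⟩
    rw [← s.smul_star m hm0 F hF] at h1
    refine s.mono (m • F) (s.star E * F) (aux_smul_ne_bot hm0 hF) ?_ h1
    rintro y hy
    obtain ⟨f, hfF, rfl⟩ := aux_mem_smul.1 hy
    exact Submodule.mul_mem_mul hm hfF
  calc s.star E * s.star F ≤ s.star (s.star E * F) := step2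
    _ ≤ s.star (s.star (E * F)) :=
        s.mono _ _ hsEF step1
    _ = s.star (E * F) := s.star_star _ hEF

omit [IsFractionRing R K] in
lemma aux_pow_ne_bot (E : Submodule R K) (hE : E ≠ ⊥) (n : ℕ) : E ^ n ≠ ⊥ := by
  induction n with
  | zero =>
    intro h
    have h1 : (1 : K) ∈ (E ^ 0 : Submodule R K) := by
      rw [pow_zero]; exact Submodule.one_le.1 le_rfl
    rw [h, Submodule.mem_bot] at h1
    exact one_ne_zero h1
  | succ n ih => rw [pow_succ]; exact aux_mul_ne_bot _ _ ih hE

lemma aux_pow_mem_star (E : Submodule R K) (hE : E ≠ ⊥) {y : K} (hy : y ∈ s.star E) (n : ℕ) :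
    y ^ n ∈ s.star (E ^ n) := by
  induction n with
  | zero =>
    rw [pow_zero, pow_zero]
    exact s.le_star 1 (by simpa using aux_pow_ne_bot E hE 0) (Submodule.one_le.1 le_rfl)
  | succ n ih =>
    rw [pow_succ, pow_succ]
    exact s.aux_star_mul_star_le (E ^ n) E (aux_pow_ne_bot E hE n) hE
      (Submodule.mul_mem_mul ih hy)

end SemistarOperation

/-- Let `⋆` be a semistar operation of finite type on the integral domain `R` and
let `I` be a quasi-`⋆`-ideal of `R`.  Then `√I^⋆ ∩ R = √I`, i.e. `√I` is also a
quasi-`⋆`-ideal of `R`. -/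
theorem radical_contract_eq_radical {R K : Type*} [CommRing R] [IsDomain R] [Field K]
    [Algebra R K] [IsFractionRing R K] (s : SemistarOperation R K) (hs : s.FiniteType)
    (I : Ideal R) (hI : s.IsQuasiStarIdeal I) :
    s.contract I.radical = I.radical := by
  obtain ⟨hIbot, hIc⟩ := hI
  have hinj : Function.Injective (Algebra.linearMap R K) := IsFractionRing.injective R K
  have hmapbot : ∀ J : Ideal R, J ≠ ⊥ → Submodule.map (Algebra.linearMap R K) J ≠ ⊥ := by
    intro J hJ h
    apply hJ
    rw [eq_bot_iff]
    intro a ha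
    have : Algebra.linearMap R K a ∈ Submodule.map (Algebra.linearMap R K) J :=
      Submodule.mem_map_of_mem ha
    rw [h, Submodule.mem_bot] at this
    have h0 : Algebra.linearMap R K a = Algebra.linearMap R K 0 := by simpa using this
    simpa using hinj h0
  have hradbot : I.radical ≠ ⊥ := fun h => hIbot (le_bot_iff.1 (h ▸ Ideal.le_radical))
  apply le_antisymm
  · intro x hx
    have hx' : Algebra.linearMap R K x ∈
        s.star (Submodule.map (Algebra.linearMap R K) I.radical) := hx
    obtain ⟨F, hFG, hFbot, hFle, hxF⟩ :=
      (hs _ (hmapbot _ hradbot) (Algebra.linearMap R K x)).1 hx'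
    set J : Ideal R := Submodule.comap (Algebra.linearMap R K) F ⊓ I.radical with hJdef
    have hmapJ : Submodule.map (Algebra.linearMap R K) J = F := by
      apply le_antisymm
      · rw [Submodule.map_le_iff_le_comap]
        exact inf_le_left
      · intro y hy
        obtain ⟨a, haR, rfl⟩ := hFle hy
        exact Submodule.mem_map_of_mem ⟨hy, haR⟩
    have hJfg : J.FG := Submodule.fg_of_fg_map_injective _ hinj (hmapJ ▸ hFG)
    obtain ⟨n, hn⟩ := Ideal.exists_pow_le_of_le_radical_of_fg (inf_le_right :
      J ≤ I.radical) hJfg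
    have h1 : Algebra.linearMap R K x ^ n ∈ s.star (F ^ n) :=
      s.aux_pow_mem_star F hFbot hxF n
    have hFn : (F ^ n : Submodule R K) =
        Submodule.map (Algebra.linearMap R K) (J ^ n) := by
      rw [← hmapJ]
      exact (Submodule.map_pow (M := J) (Algebra.ofId R K) n).symm
    have h2 : Algebra.linearMap R K x ^ n ∈
        s.star (Submodule.map (Algebra.linearMap R K) I) := by
      refine s.mono _ _ ?_ ?_ h1
      · exact fun h => SemistarOperation.aux_pow_ne_bot F hFbot n h
      · rw [hFn]
        exact Submodule.map_mono hn
    have h3 : x ^ n ∈ s.contract I := by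
      show Algebra.linearMap R K (x ^ n) ∈ s.idealStar I
      simpa [map_pow, SemistarOperation.idealStar] using h2
    rw [hIc] at h3
    exact Ideal.mem_radical_of_pow_mem (Ideal.le_radical h3)
  · intro x hx
    show Algebra.linearMap R K x ∈ s.idealStar I.radical
    exact s.le_star _ (hmapbot _ hradbot) (Submodule.mem_map_of_mem hx)
end

section
/- Let R be a commutative integral domain and let I be a proper ideal of R. If each prime ideal of R minimal over I is the radical of a finitely generated ideal, then I has only finitely many minimal primes. -/
set_option linter.unnecessarySimpa false


/-- Let `R` be an integral domain and `I` a proper ideal of `R`.  If each prime ideal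
minimal over `I` is the radical of a finitely generated ideal, then `I` has only
finitely many minimal primes. -/
theorem minimalPrimes_finite_of_forall_radical_fg {R : Type*} [CommRing R] [IsDomain R]
    (I : Ideal R) (hI : I ≠ ⊤)
    (h : ∀ P ∈ I.minimalPrimes, ∃ F : Ideal R, F.FG ∧ P = F.radical) :
    I.minimalPrimes.Finite := by
  by_contra hfin
  -- work with the subtype of minimal primes, which is infinite
  haveI : Infinite I.minimalPrimes := Set.infinite_coe_iff.mpr hfin
  -- pick an ultrafilter extending the cofinite filter
  haveI : (Filter.cofinite : Filter I.minimalPrimes).NeBot := Filter.cofinite_neBot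
  let U : Ultrafilter I.minimalPrimes := Ultrafilter.of Filter.cofinite
  have hU : ↑U ≤ (Filter.cofinite : Filter I.minimalPrimes) := Ultrafilter.of_le _
  have hprime : ∀ s : I.minimalPrimes, (s : Ideal R).IsPrime := fun s => s.2.1.1
  have hle : ∀ s : I.minimalPrimes, I ≤ (s : Ideal R) := fun s => s.2.1.2
  -- the "limit" ideal along the ultrafilter
  let Q : Ideal R :=
    { carrier := {r | {s : I.minimalPrimes | r ∈ (s : Ideal R)} ∈ U}
      zero_mem' := by
        have : {s : I.minimalPrimes | (0 : R) ∈ (s : Ideal R)} = Set.univ := by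
          ext s; simp [Ideal.zero_mem]
        show {s : I.minimalPrimes | (0 : R) ∈ (s : Ideal R)} ∈ U
        rw [this]; exact Filter.univ_mem
      add_mem' := by
        intro a b ha hb
        refine Filter.mem_of_superset (Filter.inter_mem ha hb) ?_
        rintro s ⟨h1, h2⟩
        exact Ideal.add_mem _ h1 h2
      smul_mem' := by
        intro c x hx
        refine Filter.mem_of_superset hx ?_
        intro s hs
        exact Ideal.mul_mem_left _ c hs }
  have hQprime : Q.IsPrime := by
    constructor
    · intro h1
      have h1'' : (1 : R) ∈ Q := h1 ▸ Submodule.mem_top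
      have : {s : I.minimalPrimes | (1 : R) ∈ (s : Ideal R)} = ∅ := by
        ext s
        simp only [Set.mem_setOf_eq, Set.mem_empty_iff_false, iff_false]
        exact fun hx => (hprime s).ne_top ((Ideal.eq_top_iff_one _).mpr hx)
      have h1' : ({s : I.minimalPrimes | (1 : R) ∈ (s : Ideal R)} : Set _) ∈ U := h1''
      rw [this] at h1'
      exact Filter.empty_notMem _ h1'
    · intro a b hab
      have hsub : {s : I.minimalPrimes | a * b ∈ (s : Ideal R)} ⊆
          {s : I.minimalPrimes | a ∈ (s : Ideal R)} ∪ {s : I.minimalPrimes | b ∈ (s : Ideal R)} :=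
        fun s hs => (hprime s).mem_or_mem hs
      have := Filter.mem_of_superset hab hsub
      exact Ultrafilter.union_mem_iff.mp this
  have hIQ : I ≤ Q := by
    intro r hr
    have : {s : I.minimalPrimes | r ∈ (s : Ideal R)} = Set.univ := by
      ext s; simp [hle s hr]
    show {s : I.minimalPrimes | r ∈ (s : Ideal R)} ∈ U
    rw [this]; exact Filter.univ_mem
  -- there is a minimal prime below Q
  obtain ⟨P, hP, hPQ⟩ := Ideal.exists_minimalPrimes_le (J := Q) hIQ
  obtain ⟨F, hFfg, hPF⟩ := h P hP
  obtain ⟨T, hT⟩ := hFfg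
  -- every generator of F lies in Q, hence ultrafilter-many minimal primes contain F
  have hmem : {s : I.minimalPrimes | ∀ f ∈ T, f ∈ (s : Ideal R)} ∈ U := by
    have : {s : I.minimalPrimes | ∀ f ∈ T, f ∈ (s : Ideal R)} =
        ⋂ f ∈ T, {s : I.minimalPrimes | f ∈ (s : Ideal R)} := by
      ext s; simp
    rw [this]
    refine (Filter.biInter_finset_mem T).mpr fun f hf => ?_
    have hfQ : f ∈ Q := hPQ (by
      rw [hPF]
      exact Ideal.le_radical (hT ▸ Ideal.subset_span hf))
    exact hfQ
  -- but any such minimal prime equals P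
  have hsingle : {s : I.minimalPrimes | ∀ f ∈ T, f ∈ (s : Ideal R)} ⊆ {(⟨P, hP⟩ : I.minimalPrimes)} := by
    intro s hs
    have hFle : F ≤ (s : Ideal R) := by
      rw [← hT, Ideal.span_le]
      exact fun f hf => hs f hf
    have hPle : P ≤ (s : Ideal R) := by
      rw [hPF]
      calc F.radical ≤ (s : Ideal R).radical := Ideal.radical_mono hFle
        _ = (s : Ideal R) := (hprime s).radical
    have : (s : Ideal R) = P := le_antisymm (s.2.2 ⟨hP.1.1, hP.1.2⟩ hPle) hPle
    exact Set.mem_singleton_iff.mpr (by apply Subtype.ext; exact this)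
  have hsingU : ({(⟨P, hP⟩ : I.minimalPrimes)} : Set I.minimalPrimes) ∈ U :=
    Filter.mem_of_superset hmem hsingle
  have hcompl : ({(⟨P, hP⟩ : I.minimalPrimes)} : Set I.minimalPrimes)ᶜ ∈ U :=
    hU ((Set.finite_singleton _).compl_mem_cofinite)
  have : (∅ : Set I.minimalPrimes) ∈ U := by
    have := Filter.inter_mem hsingU hcompl
    simpa using this
  exact Filter.empty_notMem _ this
end

section
/- Let R be a commutative integral domain and let I be a t-ideal of R. If each minimal prime ideal of I is the radical of a t-finite ideal, then the set Min(I) of prime ideals minimal over I is finite. -/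
set_option linter.unusedSectionVars false
set_option linter.unusedVariables false


variable {R K : Type*} [CommRing R] [IsDomain R] [Field K] [Algebra R K] [IsFractionRing R K]

/-- `(R : E) = {x ∈ K | xE ⊆ R}`, for an `R`-submodule `E` of `K`. -/
def Submodule.dualSubmodule (E : Submodule R K) : Submodule R K where
  carrier := {x : K | ∀ y ∈ E, x * y ∈ (1 : Submodule R K)}
  add_mem' := by
    intro a b ha hb y hy
    rw [add_mul]
    exact add_mem (ha y hy) (hb y hy)
  zero_mem' := by
    intro y hy
    rw [zero_mul]
    exact zero_mem _
  smul_mem' := by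
    intro c x hx y hy
    rw [smul_mul_assoc]
    exact Submodule.smul_mem _ c (hx y hy)

/-- The `v`-operation: `E^v = ((R : E) : R) = (E⁻¹)⁻¹`. -/
def Submodule.vOp (E : Submodule R K) : Submodule R K :=
  E.dualSubmodule.dualSubmodule

/-- The `t`-operation, the finite type semistar operation associated to `v`:
`E^t` is the union of the `F^v` over the nonzero finitely generated
submodules `F ⊆ E`. -/
def Submodule.tOp (E : Submodule R K) : Submodule R K :=
  ⨆ F ∈ {F : Submodule R K | F.FG ∧ F ≠ ⊥ ∧ F ≤ E}, F.vOp

namespace TIdealAux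

open Submodule

lemma mem_dual {E : Submodule R K} {x : K} :
    x ∈ E.dualSubmodule ↔ ∀ y ∈ E, x * y ∈ (1 : Submodule R K) := Iff.rfl

lemma dual_antitone {E F : Submodule R K} (h : E ≤ F) :
    F.dualSubmodule ≤ E.dualSubmodule := fun _ hx y hy => hx y (h hy)

lemma le_vOp (E : Submodule R K) : E ≤ E.vOp := by
  intro x hx y hy
  rw [mul_comm]
  exact hy x hx

lemma dual_one : (1 : Submodule R K).dualSubmodule = 1 := by
  apply le_antisymm
  · intro x hx
    simpa using hx 1 (Submodule.one_le.mp le_rfl)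
  · intro x hx y hy
    simpa using Submodule.mul_mem_mul hx hy

lemma vOp_le_one {E : Submodule R K} (h : E ≤ 1) : E.vOp ≤ 1 := by
  have h1 : (1 : Submodule R K) ≤ E.dualSubmodule :=
    le_trans (le_of_eq dual_one.symm) (dual_antitone h)
  exact (dual_antitone h1).trans (le_of_eq dual_one)

lemma mul_mem_vOp {A B : Submodule R K} {x y : K} (hx : x ∈ A.vOp) (hy : y ∈ B.vOp) :
    x * y ∈ (A * B).vOp := by
  intro z hz
  have hyz : y * z ∈ A.dualSubmodule := by
    intro a ha
    have hza : z * a ∈ B.dualSubmodule := by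
      intro b hb
      have : z * (a * b) ∈ (1 : Submodule R K) := hz _ (Submodule.mul_mem_mul ha hb)
      simpa [mul_assoc] using this
    have := hy _ hza
    simpa [mul_assoc] using this
  have := hx _ hyz
  simpa [mul_assoc] using this

lemma pow_mem_vOp {A : Submodule R K} {x : K} (hx : x ∈ A.vOp) (n : ℕ) :
    x ^ (n + 1) ∈ (A ^ (n + 1)).vOp := by
  induction n with
  | zero => simpa using hx
  | succ n ih =>
      have := mul_mem_vOp ih hx
      rw [← pow_succ, ← pow_succ] at this
      exact this

lemma vOp_le_tOp {F E : Submodule R K} (hFG : F.FG) (hF0 : F ≠ ⊥) (hFE : F ≤ E) :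
    F.vOp ≤ E.tOp := by
  exact le_iSup₂_of_le F ⟨hFG, hF0, hFE⟩ le_rfl

lemma le_tOp (E : Submodule R K) : E ≤ E.tOp := by
  intro x hx
  rcases eq_or_ne x 0 with rfl | hx0
  · exact zero_mem _
  · refine vOp_le_tOp (Submodule.fg_span_singleton x) ?_ ?_ (le_vOp _ (Submodule.mem_span_singleton_self x))
    · simpa using hx0
    · simpa [Submodule.span_singleton_le_iff_mem] using hx

lemma tOp_mono {E E' : Submodule R K} (h : E ≤ E') : E.tOp ≤ E'.tOp := by
  refine iSup₂_le fun F hF => ?_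
  exact vOp_le_tOp hF.1 hF.2.1 (hF.2.2.trans h)


lemma exists_mul_pow_mem {I P : Ideal R} (hP : P ∈ I.minimalPrimes) {a : R} (ha : a ∈ P) :
    ∃ s ∉ P, ∃ n : ℕ, s * a ^ n ∈ I := by
  have hPp : P.IsPrime := hP.1.1
  have h1P : (1 : R) ∉ P := (Ideal.ne_top_iff_one P).mp hPp.ne_top
  by_contra hcon
  push_neg at hcon
  set S : Submonoid R :=
    { carrier := {x | ∃ s ∉ P, ∃ n : ℕ, x = s * a ^ n}
      mul_mem' := by
        rintro x y ⟨s, hs, n, rfl⟩ ⟨t, ht, m, rfl⟩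
        refine ⟨s * t, fun hst => ((hPp.mem_or_mem hst).elim hs ht), n + m, by ring⟩
      one_mem' := ⟨1, h1P, 0, by ring⟩ } with hS
  have hdisj : Disjoint (I : Set R) (S : Set R) := by
    rw [Set.disjoint_left]
    rintro x hxI ⟨s, hs, n, rfl⟩
    exact hcon s hs n hxI
  obtain ⟨p, hpPrime, hIp, hdisj'⟩ := Ideal.exists_le_prime_disjoint I S hdisj
  have hpP : p ≤ P := by
    intro t htp
    by_contra htP
    exact Set.disjoint_left.mp hdisj' htp ⟨t, htP, 0, by ring⟩
  have hPle : P ≤ p := hP.2 ⟨hpPrime, hIp⟩ hpP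
  exact Set.disjoint_left.mp hdisj' (hPle ha) ⟨1, h1P, 1, by ring⟩

lemma exists_mul_pow_le {I P : Ideal R} (hP : P ∈ I.minimalPrimes) (T : Finset R) :
    (∀ x ∈ T, x ∈ P) →
      ∃ s ∉ P, ∃ n : ℕ, Ideal.span {s} * Ideal.span (T : Set R) ^ (n + 1) ≤ I := by
  classical
  have hPp : P.IsPrime := hP.1.1
  induction T using Finset.induction_on with
  | empty =>
      intro _
      refine ⟨1, (Ideal.ne_top_iff_one P).mp hPp.ne_top, 0, ?_⟩
      simp
  | @insert a T haT ih =>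
      intro hT
      obtain ⟨t, htP, N, hN⟩ := ih (fun x hx => hT x (Finset.mem_insert_of_mem hx))
      obtain ⟨s, hsP, M, hM⟩ := exists_mul_pow_mem hP (hT a (Finset.mem_insert_self a T))
      have hM1 : s * a ^ (M + 1) ∈ I := by
        have := I.mul_mem_right a hM
        rwa [mul_assoc, ← pow_succ] at this
      refine ⟨s * t, fun hst => ((hPp.mem_or_mem hst).elim hsP htP), N + M + 1, ?_⟩
      rw [Finset.coe_insert, Ideal.span_insert]
      have hexp : N + M + 1 + 1 = (M + 1) + (N + 1) := by ring
      rw [hexp]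
      have key : (Ideal.span {a} ⊔ Ideal.span (T : Set R)) ^ ((M + 1) + (N + 1))
          ≤ Ideal.span {a} ^ (M + 1) ⊔ Ideal.span (T : Set R) ^ (N + 1) :=
        Ideal.sup_pow_add_le_pow_sup_pow
      refine le_trans (Ideal.mul_mono_right key) ?_
      rw [Ideal.mul_sup]
      refine sup_le ?_ ?_
      · rw [Ideal.span_singleton_pow, Ideal.span_singleton_mul_span_singleton,
          Ideal.span_singleton_le_iff_mem]
        have heq : s * t * a ^ (M + 1) = t * (s * a ^ (M + 1)) := by ring
        rw [heq]
        exact I.mul_mem_left t hM1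
      · have heq : Ideal.span {s * t} = Ideal.span {t} * Ideal.span {s} := by
          rw [Ideal.span_singleton_mul_span_singleton, mul_comm t s]
        rw [heq, mul_comm (Ideal.span {t}) (Ideal.span {s}), mul_assoc]
        calc Ideal.span {s} * (Ideal.span {t} * Ideal.span (T : Set R) ^ (N + 1))
            ≤ Ideal.span {s} * I := Ideal.mul_mono_right hN
          _ ≤ I := Ideal.mul_le_right

end TIdealAux

namespace TIdealAux
open Submodule

lemma map_le_one (I : Ideal R) : Submodule.map (Algebra.linearMap R K) I ≤ 1 := by
  rw [Submodule.one_eq_range]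
  rintro x ⟨a, _, rfl⟩
  exact ⟨a, rfl⟩

lemma tOp_map_minimalPrime {I P : Ideal R} (hP : P ∈ I.minimalPrimes)
    (ht : (Submodule.map (Algebra.linearMap R K) I).tOp = Submodule.map (Algebra.linearMap R K) I) :
    (Submodule.map (Algebra.linearMap R K) P).tOp = Submodule.map (Algebra.linearMap R K) P := by
  have hPp : P.IsPrime := hP.1.1
  have hinj : Function.Injective (Algebra.linearMap R K) := IsFractionRing.injective R K
  refine le_antisymm ?_ (le_tOp _)
  refine iSup₂_le fun F hF => ?_
  obtain ⟨hFG, hF0, hFP⟩ := hF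
  set G : Ideal R := Submodule.comap (Algebra.linearMap R K) F with hGdef
  have hF1 : F ≤ 1 := hFP.trans (map_le_one P)
  have hmapG : Submodule.map (Algebra.linearMap R K) G = F := by
    rw [hGdef, Submodule.map_comap_eq, ← Submodule.one_eq_range]
    exact inf_eq_right.mpr hF1
  have hGfg : G.FG := Submodule.fg_of_fg_map_injective _ hinj (hmapG ▸ hFG)
  have hGP : G ≤ P := by
    intro x hx
    have : (Algebra.linearMap R K) x ∈ Submodule.map (Algebra.linearMap R K) P :=
      hFP (hmapG ▸ Submodule.mem_map_of_mem hx)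
    obtain ⟨y, hyP, hyx⟩ := this
    rwa [← hinj hyx]
  have hG0 : G ≠ ⊥ := fun h => hF0 (by rw [← hmapG, h, Submodule.map_bot])
  obtain ⟨Tf, hTf⟩ := hGfg
  obtain ⟨s, hsP, n, hsn⟩ := exists_mul_pow_le hP Tf
    (fun x hx => hGP (hTf ▸ Ideal.subset_span hx))
  rw [hTf] at hsn
  intro x hx
  have hx1 : x ∈ (1 : Submodule R K) := vOp_le_one hF1 hx
  rw [Submodule.one_eq_range] at hx1
  obtain ⟨r, rfl⟩ := hx1
  have hxn := pow_mem_vOp hx n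
  have hsv : (Algebra.linearMap R K) s ∈ (Submodule.map (Algebra.linearMap R K) (Ideal.span {s})).vOp :=
    le_vOp _ (Submodule.mem_map_of_mem (Ideal.mem_span_singleton_self s))
  have hprod := mul_mem_vOp hsv hxn
  have hEq : Submodule.map (Algebra.linearMap R K) (Ideal.span {s}) * F ^ (n + 1)
      = Submodule.map (Algebra.linearMap R K) (Ideal.span {s} * G ^ (n + 1)) := by
    have h1 := Submodule.map_mul (Ideal.span {s}) (G ^ (n + 1)) (Algebra.ofId R K)
    have h2 := Submodule.map_pow G (Algebra.ofId R K) (n + 1)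
    rw [show (Algebra.ofId R K).toLinearMap = Algebra.linearMap R K from rfl] at h1 h2
    rw [h1, h2, hmapG]
  rw [hEq] at hprod
  have hne : Ideal.span {s} * G ^ (n + 1) ≠ ⊥ := by
    rw [Ne, Ideal.mul_eq_bot]
    push_neg
    refine ⟨?_, ?_⟩
    · rw [Ne, Ideal.span_singleton_eq_bot]
      exact fun h => hsP (h ▸ P.zero_mem)
    · exact pow_ne_zero _ hG0
  have hfg2 : (Ideal.span {s} * G ^ (n + 1)).FG :=
    Submodule.FG.mul (Submodule.fg_span_singleton s) (Submodule.FG.pow ⟨Tf, hTf⟩ _)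
  have hmem : (Algebra.linearMap R K) s * (Algebra.linearMap R K) r ^ (n + 1)
      ∈ Submodule.map (Algebra.linearMap R K) I := by
    have hv := vOp_le_tOp (Submodule.FG.map _ hfg2)
      (fun h => hne (Submodule.map_injective_of_injective hinj (by rw [h, Submodule.map_bot])))
      (Submodule.map_mono hsn) hprod
    rwa [ht] at hv
  obtain ⟨i, hiI, hieq⟩ := hmem
  have : (Algebra.linearMap R K) i = (Algebra.linearMap R K) (s * r ^ (n + 1)) := by
    rw [hieq]
    simp [Algebra.linearMap_apply, map_mul, map_pow]
  have hsr : s * r ^ (n + 1) ∈ I := by rwa [hinj this] at hiI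
  have hsrP : s * r ^ (n + 1) ∈ P := hP.1.2 hsr
  have hrP : r ∈ P := hPp.mem_of_pow_mem _ ((hPp.mem_or_mem hsrP).resolve_left hsP)
  exact Submodule.mem_map_of_mem hrP


lemma le_of_map_le_map {A B : Ideal R}
    (h : Submodule.map (Algebra.linearMap R K) A ≤ Submodule.map (Algebra.linearMap R K) B) :
    A ≤ B := by
  intro x hx
  obtain ⟨y, hy, hyx⟩ := h (Submodule.mem_map_of_mem hx)
  rwa [← (IsFractionRing.injective R K) hyx]

lemma le_of_tOp_map_eq {A B Q : Ideal R}
    (hAB : (Submodule.map (Algebra.linearMap R K) A).tOp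
      = (Submodule.map (Algebra.linearMap R K) B).tOp)
    (hQ : (Submodule.map (Algebra.linearMap R K) Q).tOp = Submodule.map (Algebra.linearMap R K) Q)
    (hBQ : B ≤ Q) : A ≤ Q := by
  refine le_of_map_le_map (K := K) ((le_tOp _).trans ?_)
  rw [hAB]
  exact (tOp_mono (Submodule.map_mono hBQ)).trans (le_of_eq hQ)


lemma exists_finset_cover {ι : Type*} (I : Ideal R) (G : ι → Ideal R) (hfg : ∀ i, (G i).FG)
    (hcov : ∀ Q : Ideal R, Q.IsPrime → I ≤ Q → ∃ i, G i ≤ Q) :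
    ∃ T : Finset ι, ∀ Q : Ideal R, Q.IsPrime → I ≤ Q → ∃ i ∈ T, G i ≤ Q := by
  classical
  by_contra hcon
  push_neg at hcon
  choose Q hQp hQI hQn using hcon
  let 𝒰 : Ultrafilter (Finset ι) := Ultrafilter.of Filter.atTop
  have hle : (𝒰 : Filter (Finset ι)) ≤ Filter.atTop := Ultrafilter.of_le _
  let J : Ideal R :=
    { carrier := {x | ∀ᶠ T in (𝒰 : Filter (Finset ι)), x ∈ Q T}
      add_mem' := fun ha hb => (ha.and hb).mono fun T h => (Q T).add_mem h.1 h.2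
      zero_mem' := Filter.Eventually.of_forall fun T => (Q T).zero_mem
      smul_mem' := fun c x hx => hx.mono fun T h => (Q T).smul_mem c h }
  have hmemJ : ∀ x : R, x ∈ J ↔ ∀ᶠ T in (𝒰 : Filter (Finset ι)), x ∈ Q T := fun x => Iff.rfl
  have hJprime : J.IsPrime := by
    constructor
    · intro h
      have h1 : (1 : R) ∈ J := h ▸ Submodule.mem_top
      obtain ⟨T, hT⟩ := ((hmemJ 1).mp h1).exists
      exact (hQp T).ne_top ((Ideal.eq_top_iff_one _).mpr hT)
    · intro x y hxy
      have : ∀ᶠ T in (𝒰 : Filter (Finset ι)), x ∈ Q T ∨ y ∈ Q T :=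
        ((hmemJ _).mp hxy).mono fun T h => (hQp T).mem_or_mem h
      exact Ultrafilter.eventually_or.mp this
  have hIJ : I ≤ J := fun x hx =>
    (hmemJ x).mpr (Filter.Eventually.of_forall fun T => hQI T hx)
  obtain ⟨i₀, hi₀⟩ := hcov J hJprime hIJ
  obtain ⟨s, hs⟩ := hfg i₀
  have hgen : ∀ᶠ T in (𝒰 : Filter (Finset ι)), ∀ g ∈ s, g ∈ Q T := by
    rw [Filter.eventually_all_finset]
    intro g hg
    exact (hmemJ g).mp (hi₀ (hs ▸ Ideal.subset_span hg))
  have hmemT : ∀ᶠ T in (𝒰 : Filter (Finset ι)), i₀ ∈ T := by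
    have h1 : ∀ᶠ T in (Filter.atTop : Filter (Finset ι)), {i₀} ≤ T :=
      Filter.eventually_ge_atTop {i₀}
    have h2 : ∀ᶠ T in (𝒰 : Filter (Finset ι)), {i₀} ≤ T := hle h1
    exact h2.mono fun T h => h (Finset.mem_singleton_self i₀)
  obtain ⟨T, hT1, hT2⟩ := (hgen.and hmemT).exists
  refine hQn T i₀ hT2 ?_
  rw [← hs, Ideal.span_le]
  exact fun g hg => hT1 g hg

end TIdealAux


open TIdealAux in
/-- Let `I` be a `t`-ideal of the integral domain `R`.  If each minimal prime of `I`
is the radical of a `t`-finite ideal, then `Min(I)` is finite. -/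
theorem minimalPrimes_finite_of_tIdeal (I : Ideal R) (hI : I ≠ ⊥)
    (ht : (Submodule.map (Algebra.linearMap R K) I).tOp = Submodule.map (Algebra.linearMap R K) I)
    (h : ∀ P ∈ I.minimalPrimes, ∃ L : Ideal R, L ≠ ⊥ ∧
      (∃ F : Ideal R, F.FG ∧ F ≠ ⊥ ∧
        (Submodule.map (Algebra.linearMap R K) F).tOp =
          (Submodule.map (Algebra.linearMap R K) L).tOp) ∧
      P = L.radical) :
    I.minimalPrimes.Finite := by
  classical
  choose L hL0 hFex hrad using h
  choose F hFfg hF0 hFt using hFex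
  have hcov : ∀ Q : Ideal R, Q.IsPrime → I ≤ Q →
      ∃ P : ↥I.minimalPrimes, F P.1 P.2 ≤ Q := by
    intro Q hQp hIQ
    obtain ⟨P, hP, hPQ⟩ := Ideal.exists_minimalPrimes_le (J := Q) hIQ
    refine ⟨⟨P, hP⟩, ?_⟩
    have htP := tOp_map_minimalPrime hP ht
    have hLP : L P hP ≤ P := by
      have h2 := Ideal.le_radical (I := L P hP)
      rwa [← hrad P hP] at h2
    exact (le_of_tOp_map_eq (hFt P hP) htP hLP).trans hPQ
  obtain ⟨T, hT⟩ := exists_finset_cover I (fun P : ↥I.minimalPrimes => F P.1 P.2)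
    (fun P => hFfg P.1 P.2) hcov
  have hsub : I.minimalPrimes ⊆ (fun P : ↥I.minimalPrimes => (P : Ideal R)) '' ↑T := by
    intro Q hQ
    obtain ⟨P, hPT, hPQ⟩ := hT Q hQ.1.1 hQ.1.2
    have htQ := tOp_map_minimalPrime hQ ht
    have hLQ : L P.1 P.2 ≤ Q := le_of_tOp_map_eq (hFt P.1 P.2).symm htQ hPQ
    have hPQ' : P.1 ≤ Q := by
      rw [hrad P.1 P.2]
      exact (Ideal.radical_mono hLQ).trans (le_of_eq hQ.1.1.radical)
    have hQP : Q ≤ P.1 := hQ.2 ⟨P.2.1.1, P.2.1.2⟩ hPQ'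
    exact ⟨P, hPT, le_antisymm hPQ' hQP⟩
  exact Set.Finite.subset (T.finite_toSet.image _) hsub
end

section
/- Let R be a commutative integral domain with quotient field K, and suppose R has a Noetherian overring S (that is, R ⊆ S ⊆ K and S is a Noetherian ring). If I is an ideal of R such that IS ∩ R = I, then the set Min(I) of prime ideals of R minimal over I is finite. -/
/-- Suppose the integral domain `R` has a Noetherian overring `S`
(`R ⊆ S ⊆ K`, `K` the quotient field of `R`, `S` Noetherian).  If `I` is an
ideal of `R` such that `IS ∩ R = I`, then `Min(I)` is finite. -/
theorem minimalPrimes_finite_of_noetherian_overring {R K : Type*} [CommRing R]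
    [IsDomain R] [Field K] [Algebra R K] [IsFractionRing R K]
    (S : Subalgebra R K) (hS : IsNoetherianRing S) (I : Ideal R)
    (h : (I.map (algebraMap R S)).comap (algebraMap R S) = I) :
    I.minimalPrimes.Finite := by
  haveI := hS
  have hfin : (Ideal.map (algebraMap R S) I).minimalPrimes.Finite := by
    rw [Ideal.minimalPrimes_eq_comap]
    exact (minimalPrimes.finite_of_isNoetherianRing _).image _
  have hsub : I.minimalPrimes ⊆
      (Ideal.comap (algebraMap R S)) '' (I.map (algebraMap R S)).minimalPrimes := by
    intro p hp
    rw [← h] at hp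
    obtain ⟨p', hp', e⟩ := Ideal.exists_minimalPrimes_comap_eq _ p hp
    exact ⟨p', hp', e⟩
  exact (hfin.image _).subset hsub
end

section
/- Let R be a commutative integral domain and let ⋆ be a semistar operation on R that is stable and of finite type. Let I be a nonzero ideal of R such that I^⋆ ∩ R ≠ R. Then ⋆-Min(I) = Min(I^⋆ ∩ R), i.e., the set of quasi-⋆-prime ideals minimal over I coincides with the set of prime ideals minimal over I^⋆ ∩ R. -/
open Pointwise

section Aux

open Pointwise

variable {R K : Type*} [CommRing R] [IsDomain R] [Field K] [Algebra R K] [IsFractionRing R K]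

/-- Per-element characterization of minimal primes: if `P` is minimal over `J` and
`x ∈ P`, then `t * x ^ n ∈ J` for some `n` and some `t ∉ P`. -/
theorem exists_not_mem_mul_pow_mem {R : Type*} [CommRing R] {J P : Ideal R}
    (hP : P ∈ J.minimalPrimes) {x : R} (hx : x ∈ P) :
    ∃ (n : ℕ) (t : R), t ∉ P ∧ t * x ^ n ∈ J := by
  by_contra hcon
  push_neg at hcon
  have hPp : P.IsPrime := hP.1.1
  have hone : (1 : R) ∉ P := fun h => hPp.ne_top ((Ideal.eq_top_iff_one P).2 h)
  set S : Submonoid R :=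
    { carrier := {y | ∃ t, t ∉ P ∧ ∃ n : ℕ, y = t * x ^ n}
      one_mem' := ⟨1, hone, 0, by ring⟩
      mul_mem' := by
        rintro a b ⟨t, ht, n, rfl⟩ ⟨u, hu, m, rfl⟩
        exact ⟨t * u, fun h => ((hPp.mem_or_mem h).elim ht hu), n + m, by ring⟩ } with hS
  have hdisj : Disjoint (J : Set R) (S : Set R) := by
    rw [Set.disjoint_left]
    rintro y hy ⟨t, ht, n, rfl⟩
    exact hcon n t ht hy
  obtain ⟨Q, hQp, hJQ, hdisj'⟩ := Ideal.exists_le_prime_disjoint J S hdisj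
  have hQP : Q ≤ P := by
    intro y hy
    by_contra hyP
    exact (Set.disjoint_left.mp hdisj') hy ⟨y, hyP, 0, by ring⟩
  have hxQ : x ∉ Q := fun h =>
    (Set.disjoint_left.mp hdisj') h ⟨1, hone, 1, by ring⟩
  exact hxQ ((hP.2 ⟨hQp, hJQ⟩ hQP) hx)

namespace SemistarOperation

variable (s : SemistarOperation R K)

lemma mapK_ne_bot {I : Ideal R} (hI : I ≠ ⊥) :
    Submodule.map (Algebra.linearMap R K) I ≠ ⊥ := by
  obtain ⟨x, hx, hx0⟩ := (Submodule.ne_bot_iff I).1 hI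
  refine (Submodule.ne_bot_iff _).2 ⟨algebraMap R K x, Submodule.mem_map_of_mem hx, ?_⟩
  exact (map_ne_zero_iff _ (IsFractionRing.injective R K)).2 hx0

lemma pow_ne_bot' {I : Ideal R} (hI : I ≠ ⊥) (n : ℕ) : I ^ n ≠ ⊥ := by
  obtain ⟨x, hx, hx0⟩ := (Submodule.ne_bot_iff I).1 hI
  exact (Submodule.ne_bot_iff _).2 ⟨x ^ n, Ideal.pow_mem_pow hx n, pow_ne_zero n hx0⟩

lemma le_contract {I : Ideal R} (hI : I ≠ ⊥) : I ≤ s.contract I := fun x hx =>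
  Submodule.mem_comap.mpr (s.le_star _ (mapK_ne_bot hI) (Submodule.mem_map_of_mem hx))

lemma contract_ne_bot {I : Ideal R} (hI : I ≠ ⊥) : s.contract I ≠ ⊥ := fun h =>
  hI (le_bot_iff.mp (h ▸ s.le_contract hI))

lemma contract_mono {I J : Ideal R} (hI : I ≠ ⊥) (h : I ≤ J) :
    s.contract I ≤ s.contract J :=
  Submodule.comap_mono (s.mono _ _ (mapK_ne_bot hI) (Submodule.map_mono h))

lemma idealStar_contract {I : Ideal R} (hI : I ≠ ⊥) :
    s.idealStar (s.contract I) = s.idealStar I := by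
  have h1 : Submodule.map (Algebra.linearMap R K) (s.contract I) ≤ s.idealStar I := by
    rintro _ ⟨x, hx, rfl⟩; exact hx
  refine le_antisymm ?_ (s.mono _ _ (mapK_ne_bot hI) (Submodule.map_mono (s.le_contract hI)))
  have h2 : s.idealStar (s.contract I) ≤
      s.star (s.star (Submodule.map (Algebra.linearMap R K) I)) :=
    s.mono _ _ (mapK_ne_bot (s.contract_ne_bot hI)) h1
  rwa [s.star_star _ (mapK_ne_bot hI)] at h2

lemma isQuasi_contract {I : Ideal R} (hI : I ≠ ⊥) : s.IsQuasiStarIdeal (s.contract I) := by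
  refine ⟨s.contract_ne_bot hI, ?_⟩
  show Submodule.comap (Algebra.linearMap R K) (s.idealStar (s.contract I)) = s.contract I
  rw [s.idealStar_contract hI]; rfl

lemma star_ne_bot {E : Submodule R K} (hE : E ≠ ⊥) : s.star E ≠ ⊥ := fun h =>
  hE (le_bot_iff.mp (h ▸ s.le_star E hE))

lemma mul_ne_bot' {E F : Submodule R K} (hE : E ≠ ⊥) (hF : F ≠ ⊥) : E * F ≠ ⊥ := by
  obtain ⟨e, he, he0⟩ := (Submodule.ne_bot_iff E).1 hE
  obtain ⟨f, hf, hf0⟩ := (Submodule.ne_bot_iff F).1 hF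
  exact (Submodule.ne_bot_iff _).2 ⟨e * f, Submodule.mul_mem_mul he hf, mul_ne_zero he0 hf0⟩

lemma smul_ne_bot' {x : K} (hx : x ≠ 0) {F : Submodule R K} (hF : F ≠ ⊥) : x • F ≠ ⊥ := by
  obtain ⟨f, hf, hf0⟩ := (Submodule.ne_bot_iff F).1 hF
  refine (Submodule.ne_bot_iff _).2 ⟨x • f, Submodule.smul_mem_pointwise_smul f x F hf, ?_⟩
  simpa [smul_eq_mul] using mul_ne_zero hx hf0

lemma mul_star_le {E F : Submodule R K} (hE : E ≠ ⊥) (hF : F ≠ ⊥) :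
    E * s.star F ≤ s.star (E * F) := by
  rw [Submodule.mul_le]
  intro m hm n hn
  rcases eq_or_ne m 0 with rfl | hm0
  · simpa using (s.star (E * F)).zero_mem
  have h1 : m • F ≤ E * F := by
    intro z hz
    obtain ⟨f, hf, rfl⟩ := Set.mem_smul_set.mp hz
    exact (smul_eq_mul m f).symm ▸ Submodule.mul_mem_mul hm hf
  have h2 : m • n ∈ m • s.star F := Submodule.smul_mem_pointwise_smul n m _ hn
  rw [← s.smul_star m hm0 F hF] at h2
  exact s.mono _ _ (smul_ne_bot' hm0 hF) h1 h2

lemma star_mul_star_le {E F : Submodule R K} (hE : E ≠ ⊥) (hF : F ≠ ⊥) :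
    s.star E * s.star F ≤ s.star (E * F) := by
  have hE' : s.star E ≠ ⊥ := s.star_ne_bot hE
  have h1 : s.star E * s.star F ≤ s.star (s.star E * F) := s.mul_star_le hE' hF
  have h2 : s.star E * F ≤ s.star (E * F) := by
    rw [mul_comm E F]
    calc s.star E * F = F * s.star E := mul_comm _ _
    _ ≤ s.star (F * E) := s.mul_star_le hF hE
  have h3 : s.star (s.star E * F) ≤ s.star (s.star (E * F)) :=
    s.mono _ _ (mul_ne_bot' hE' hF) h2
  rw [s.star_star _ (mul_ne_bot' hE hF)] at h3
  exact le_trans h1 h3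

lemma pow_ne_bot'' {E : Submodule R K} (hE : E ≠ ⊥) (n : ℕ) : E ^ n ≠ ⊥ := by
  obtain ⟨x, hx, hx0⟩ := (Submodule.ne_bot_iff E).1 hE
  exact (Submodule.ne_bot_iff _).2 ⟨x ^ n, Submodule.pow_mem_pow _ hx n, pow_ne_zero n hx0⟩

lemma pow_star_le {E : Submodule R K} (hE : E ≠ ⊥) :
    ∀ n : ℕ, (s.star E) ^ (n + 1) ≤ s.star (E ^ (n + 1))
  | 0 => by simpa using le_refl (s.star E)
  | n + 1 => by
    calc (s.star E) ^ (n + 2) = (s.star E) ^ (n + 1) * s.star E := pow_succ _ _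
    _ ≤ s.star (E ^ (n + 1)) * s.star E :=
        mul_le_mul' (pow_star_le hE n) (le_refl _)
    _ ≤ s.star (E ^ (n + 1) * E) := s.star_mul_star_le (pow_ne_bot'' hE _) hE
    _ = s.star (E ^ (n + 2)) := by rw [← pow_succ]

/-- The saturation of `J` at the prime `P`. -/
def sat (J P : Ideal R) (hPp : P.IsPrime) : Ideal R where
  carrier := {x | ∃ t, t ∉ P ∧ t * x ∈ J}
  zero_mem' := ⟨1, fun h => hPp.ne_top ((Ideal.eq_top_iff_one P).2 h), by simp⟩
  add_mem' := by
    rintro x y ⟨t, ht, htx⟩ ⟨u, hu, huy⟩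
    refine ⟨t * u, fun h => ((hPp.mem_or_mem h).elim ht hu), ?_⟩
    have h : (t * u) * (x + y) = u * (t * x) + t * (u * y) := by ring
    rw [h]
    exact J.add_mem (J.mul_mem_left u htx) (J.mul_mem_left t huy)
  smul_mem' := by
    rintro c x ⟨t, ht, htx⟩
    refine ⟨t, ht, ?_⟩
    have h : t * (c • x) = c * (t * x) := by rw [smul_eq_mul]; ring
    rw [h]
    exact J.mul_mem_left c htx

/-- The key lemma: if `⋆` is of finite type, then any prime minimal over a
quasi-`⋆`-ideal is itself a quasi-`⋆`-ideal. -/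
lemma contract_eq_of_mem_minimalPrimes (hs : s.FiniteType) {J P : Ideal R}
    (hJ : s.IsQuasiStarIdeal J) (hP : P ∈ J.minimalPrimes) : s.contract P = P := by
  obtain ⟨hJbot, hJc⟩ := hJ
  have hPp : P.IsPrime := hP.1.1
  have hJP : J ≤ P := hP.1.2
  have hPbot : P ≠ ⊥ := fun h => hJbot (le_bot_iff.mp (h ▸ hJP))
  refine le_antisymm (fun a ha => ?_) (s.le_contract hPbot)
  have ha' : algebraMap R K a ∈ s.star (Submodule.map (Algebra.linearMap R K) P) := ha
  obtain ⟨F, hFfg, hFbot, hFle, haF⟩ := (hs _ (mapK_ne_bot hPbot) _).1 ha'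
  set f := Algebra.linearMap R K with hf
  set F₀ : Ideal R := Submodule.comap f F with hF₀
  have hmapF₀ : Submodule.map f F₀ = F :=
    Submodule.map_comap_eq_self (le_trans hFle LinearMap.map_le_range)
  have hinj : Function.Injective f := IsFractionRing.injective R K
  have hF₀P : F₀ ≤ P := by
    intro x hx
    obtain ⟨y, hy, hxy⟩ := hFle hx
    exact hinj hxy ▸ hy
  have hF₀fg : F₀.FG :=
    Submodule.fg_of_fg_map_injective f hinj (hmapF₀ ▸ hFfg)
  have hF₀bot : F₀ ≠ ⊥ := fun h => hFbot (by rw [← hmapF₀, h, Submodule.map_bot])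
  -- the saturation
  set J' : Ideal R := sat J P hPp with hJ'
  have hrad : F₀ ≤ J'.radical := by
    intro x hx
    obtain ⟨n, t, ht, htx⟩ := exists_not_mem_mul_pow_mem hP (hF₀P hx)
    exact ⟨n, t, ht, htx⟩
  obtain ⟨n, hn⟩ := Ideal.exists_pow_le_of_le_radical_of_fg hrad hF₀fg
  set N := n + 1 with hN
  have hNle : F₀ ^ N ≤ J' := le_trans (Ideal.pow_le_pow_right (Nat.le_succ n)) hn
  obtain ⟨T, hT⟩ := Submodule.FG.pow hF₀fg N
  choose t ht1 ht2 using fun x : T =>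
    (hNle (hT ▸ Submodule.subset_span x.2 : (x : R) ∈ F₀ ^ N) :
      ∃ u, u ∉ P ∧ u * (x : R) ∈ J)
  set u : R := ∏ x ∈ T.attach, t x with hu
  have hup : u ∉ P := by
    intro h
    haveI := hPp
    obtain ⟨x, -, hx⟩ := Ideal.IsPrime.prod_mem_iff.mp h
    exact ht1 x hx
  have hcolon : F₀ ^ N ≤ J.colon (Ideal.span {u}) := by
    rw [← hT, Submodule.span_le]
    intro x hx
    rw [SetLike.mem_coe, Ideal.mem_colon_span_singleton]
    obtain ⟨c, hc⟩ := Finset.dvd_prod_of_mem t (Finset.mem_attach T ⟨x, hx⟩)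
    have hxu : x * u = c * (t ⟨x, hx⟩ * x) := by rw [hu, hc]; ring
    rw [hxu]
    exact J.mul_mem_left c (ht2 ⟨x, hx⟩)
  -- star computation
  have hstar : algebraMap R K a ∈ s.star (Submodule.map f F₀) := by rw [hmapF₀]; exact haF
  have hmappow : Submodule.map f (F₀ ^ N) = (Submodule.map f F₀) ^ N := by
    have hfl : (Algebra.ofId R K).toLinearMap = f := rfl
    rw [← hfl]
    exact Submodule.map_pow F₀ (Algebra.ofId R K) N
  have hpow : (algebraMap R K a) ^ N ∈ s.star (Submodule.map f (F₀ ^ N)) := by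
    rw [hmappow]
    exact s.pow_star_le (mapK_ne_bot hF₀bot) n (Submodule.pow_mem_pow _ hstar N)
  set u' : K := algebraMap R K u with hu'
  have hu0 : u' ≠ 0 := by
    intro h
    apply hup
    have : u = 0 := hinj (by rw [map_zero]; exact h)
    rw [this]; exact P.zero_mem
  have hbotpow : Submodule.map f (F₀ ^ N) ≠ ⊥ := mapK_ne_bot (pow_ne_bot' hF₀bot N)
  have hfinal : u' • (algebraMap R K a) ^ N ∈ s.star (u' • Submodule.map f (F₀ ^ N)) := by
    rw [s.smul_star u' hu0 _ hbotpow]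
    exact Submodule.smul_mem_pointwise_smul _ _ _ hpow
  have hle2 : u' • Submodule.map f (F₀ ^ N) ≤ Submodule.map f J := by
    intro z hz
    obtain ⟨y, hy, rfl⟩ := Set.mem_smul_set.mp hz
    obtain ⟨w, hw, rfl⟩ := hy
    refine ⟨w * u, Ideal.mem_colon_span_singleton.mp (hcolon hw), ?_⟩
    show algebraMap R K (w * u) = u' • f w
    rw [map_mul, mul_comm]; rfl
  have hmemJ : u' * (algebraMap R K a) ^ N ∈ s.idealStar J :=
    s.mono _ _ (smul_ne_bot' hu0 hbotpow) hle2 hfinal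
  have hmem : u * a ^ N ∈ s.contract J := by
    show algebraMap R K (u * a ^ N) ∈ s.idealStar J
    rw [map_mul, map_pow]
    exact hmemJ
  rw [hJc] at hmem
  exact hPp.mem_of_pow_mem N ((hPp.mem_or_mem (hJP hmem)).resolve_left hup)

end SemistarOperation

end Aux

/-- Let `⋆` be a stable semistar operation of finite type on the integral domain `R`,
and let `I` be a nonzero ideal of `R` with `I^⋆ ∩ R ≠ R`.  Then
`⋆-Min(I) = Min(I^⋆ ∩ R)`. -/
theorem starMin_eq_minimalPrimes_contract {R K : Type*} [CommRing R] [IsDomain R]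
    [Field K] [Algebra R K] [IsFractionRing R K] (s : SemistarOperation R K)
    (hstable : s.Stable) (hs : s.FiniteType) (I : Ideal R) (hI : I ≠ ⊥)
    (hne : s.contract I ≠ ⊤) :
    s.starMin I = (s.contract I).minimalPrimes := by
  have hJq := s.isQuasi_contract hI
  have hIJ : I ≤ s.contract I := s.le_contract hI
  have hJbot : s.contract I ≠ ⊥ := hJq.1
  ext P
  constructor
  · rintro ⟨⟨hPp, hPq, hIP⟩, hmin⟩
    have hJP : s.contract I ≤ P := by
      have h := s.contract_mono hI hIP
      rwa [hPq.2] at h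
    refine ⟨⟨hPp, hJP⟩, ?_⟩
    intro Q hQ hQP
    haveI := hQ.1
    obtain ⟨Q', hQ', hQ'Q⟩ := Ideal.exists_minimalPrimes_le hQ.2
    have hQ'quasi : s.IsQuasiStarIdeal Q' :=
      ⟨fun h => hJbot (le_bot_iff.mp (h ▸ hQ'.1.2)),
       s.contract_eq_of_mem_minimalPrimes hs hJq hQ'⟩
    exact (hmin ⟨hQ'.1.1, hQ'quasi, le_trans hIJ hQ'.1.2⟩ (le_trans hQ'Q hQP)).trans hQ'Q
  · intro hP
    have hPp : P.IsPrime := hP.1.1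
    have hPbot : P ≠ ⊥ := fun h => hJbot (le_bot_iff.mp (h ▸ hP.1.2))
    have hPq : s.IsQuasiStarIdeal P :=
      ⟨hPbot, s.contract_eq_of_mem_minimalPrimes hs hJq hP⟩
    refine ⟨⟨hPp, hPq, le_trans hIJ hP.1.2⟩, ?_⟩
    intro Q hQ hQP
    have hJQ : s.contract I ≤ Q := by
      have h := s.contract_mono hI hQ.2.2
      rwa [hQ.2.1.2] at h
    exact hP.2 ⟨hQ.1, hJQ⟩ hQP
end
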